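/- For every n ≥ 1 the following identity of real polynomials holds: x⁴ · Σ_{k=0}^{2n} (2^k/k!) · Hₖ‴(0) · Hₖ(x) = (2·(−1)^n/n!) · ((3 − 6n·x²)·H₂ₙ₊₁(x) − (2n+1)·(3x − 2n·x³)·H₂ₙ(x)). Equivalently, the derivated Hermite kernel K₂ₙ^{(0,3)}(x,0) = Σ_{k=0}^{2n} Hₖ(x)Hₖ‴(0)/‖Hₖ‖² equals (2·(−1)^n/(√π·n!)) · ((3 − 6n·x²)·H₂ₙ₊₁(x) − (2n+1)·(3 − 2n·x²)·x·H₂ₙ(x))/x⁴. -/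

import Mathlib

open Polynomial Finset

/-- The monic Hermite polynomials: `H₀ = 1`, `H₁ = X`,
`H_{n+2} = X·H_{n+1} − ((n+1)/2)·Hₙ`. -/
noncomputable def hermiteM : ℕ → Polynomial ℝ
  | 0 => 1
  | 1 => X
  | n + 2 => X * hermiteM (n + 1) - C (((n : ℝ) + 1) / 2) * hermiteM n

/-- The squared norm of the `n`-th monic Hermite polynomial: `√π · n! / 2ⁿ`. -/
noncomputable def hermiteNormSq (n : ℕ) : ℝ :=
  Real.sqrt Real.pi * n.factorial / 2 ^ n

lemma hermiteM_step (k : ℕ) :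
    hermiteM (k + 2) = X * hermiteM (k + 1) - C (((k : ℝ) + 1) / 2) * hermiteM k := by
  rw [hermiteM]

lemma hermiteM_deriv : ∀ n, derivative (hermiteM (n + 1)) = C ((n : ℝ) + 1) * hermiteM n
  | 0 => by simp [hermiteM]
  | 1 => by
      simp only [hermiteM_step 0]
      apply Polynomial.funext; intro x; simp [hermiteM]; ring
  | (n + 2) => by
      have i1 := hermiteM_deriv n
      have i2 := hermiteM_deriv (n + 1)
      have e : hermiteM (n + 2 + 1) = X * hermiteM (n + 2) - C (((n : ℝ) + 2) / 2) * hermiteM (n + 1) := by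
        have := hermiteM_step (n + 1); push_cast at this ⊢; convert this using 3 <;> ring
      rw [e]
      simp only [derivative_sub, derivative_mul, derivative_X, derivative_C]
      have i2' : derivative (hermiteM (n + 2)) = C ((n : ℝ) + 2) * hermiteM (n + 1) := by
        rw [show n + 2 = n + 1 + 1 from rfl, i2]; push_cast; ring_nf
      rw [i1, i2', hermiteM_step n]
      apply Polynomial.funext; intro x
      simp
      ring

lemma hermiteM_odd_zero : ∀ m, (hermiteM (2 * m + 1)).eval 0 = 0
  | 0 => by simp [hermiteM]
  | (m + 1) => by
      have ih := hermiteM_odd_zero m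
      have e : 2 * (m + 1) + 1 = (2 * m + 1) + 2 := by ring
      rw [e, hermiteM_step]
      simp [ih]

lemma hermiteM_even_zero : ∀ m, (hermiteM (2 * m)).eval 0 =
    (-1) ^ m * (2 * m).factorial / (4 ^ m * m.factorial)
  | 0 => by simp [hermiteM]
  | (m + 1) => by
      have ih := hermiteM_even_zero m
      have e : 2 * (m + 1) = (2 * m) + 2 := by ring
      rw [e, hermiteM_step]
      simp only [eval_sub, eval_mul, eval_X, eval_C, zero_mul, ih]
      have f1 : ((2 * m + 2).factorial : ℝ) = (2 * m + 2) * ((2 * m + 1) * (2 * m).factorial) := by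
        rw [show 2 * m + 2 = (2 * m + 1) + 1 from rfl, Nat.factorial_succ, Nat.factorial_succ]
        push_cast; ring
      have f2 : ((m + 1).factorial : ℝ) = (m + 1) * m.factorial := by
        rw [Nat.factorial_succ]; push_cast; ring
      have h1 : ((2 * m).factorial : ℝ) ≠ 0 := Nat.cast_ne_zero.2 (Nat.factorial_ne_zero _)
      have h2 : (m.factorial : ℝ) ≠ 0 := Nat.cast_ne_zero.2 (Nat.factorial_ne_zero _)
      have h3 : (4 : ℝ) ^ m ≠ 0 := by positivity
      rw [f1, f2]
      push_cast
      rw [pow_succ, pow_succ]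
      field_simp
      ring

/-- the coefficient in the kernel sum -/
noncomputable def hker (k : ℕ) : ℝ :=
  (2 : ℝ) ^ k / k.factorial * (derivative (derivative (derivative (hermiteM k)))).eval 0

lemma hermiteM_d3 (m : ℕ) :
    derivative (derivative (derivative (hermiteM (m + 3)))) =
      C ((((m : ℝ) + 3) * ((m : ℝ) + 2) * ((m : ℝ) + 1))) * hermiteM m := by
  have e3 : derivative (hermiteM (m + 3)) = C ((m : ℝ) + 3) * hermiteM (m + 2) := by
    rw [show m + 3 = m + 2 + 1 from rfl, hermiteM_deriv (m + 2)]; push_cast; ring_nf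
  have e2 : derivative (hermiteM (m + 2)) = C ((m : ℝ) + 2) * hermiteM (m + 1) := by
    rw [show m + 2 = m + 1 + 1 from rfl, hermiteM_deriv (m + 1)]; push_cast; ring_nf
  rw [e3]
  simp only [derivative_C_mul]
  rw [e2]
  simp only [derivative_C_mul]
  rw [hermiteM_deriv m, ← mul_assoc, ← mul_assoc, ← C_mul, ← C_mul]

lemma hker_zero_small : hker 0 = 0 ∧ hker 1 = 0 ∧ hker 2 = 0 := by
  refine ⟨?_, ?_, ?_⟩ <;> simp [hker, hermiteM, hermiteM_step]

lemma hker_even (m : ℕ) : hker (2 * m + 4) = 0 := by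
  have e : 2 * m + 4 = (2 * m + 1) + 3 := by ring
  rw [hker, e, hermiteM_d3]
  simp [hermiteM_odd_zero m]

lemma hker_odd (m : ℕ) : hker (2 * m + 3) = 8 * (-1) ^ m / m.factorial := by
  have e : 2 * m + 3 = (2 * m) + 3 := by ring
  rw [hker, e, hermiteM_d3]
  simp only [eval_mul, eval_C, hermiteM_even_zero m]
  have f1 : ((2 * m + 3).factorial : ℝ) =
      (2 * m + 3) * ((2 * m + 2) * ((2 * m + 1) * (2 * m).factorial)) := by
    rw [show 2 * m + 3 = (2 * m + 2) + 1 from rfl, Nat.factorial_succ,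
      show 2 * m + 2 = (2 * m + 1) + 1 from rfl, Nat.factorial_succ, Nat.factorial_succ]
    push_cast; ring
  have h1 : ((2 * m).factorial : ℝ) ≠ 0 := Nat.cast_ne_zero.2 (Nat.factorial_ne_zero _)
  have h2 : (m.factorial : ℝ) ≠ 0 := Nat.cast_ne_zero.2 (Nat.factorial_ne_zero _)
  have h3 : (4 : ℝ) ^ m ≠ 0 := by positivity
  have h4 : (2 : ℝ) ^ (2 * m + 3) = 8 * 4 ^ m := by
    rw [pow_add, pow_mul]; norm_num [mul_comm]
  have h5 : (2 * (m : ℝ) + 3) ≠ 0 := by positivity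
  have h6 : (2 * (m : ℝ) + 1) ≠ 0 := by positivity
  rw [f1, h4]
  push_cast
  field_simp

lemma master : ∀ (m : ℕ) (x : ℝ),
    x ^ 4 * ∑ k ∈ range (2 * m + 3), hker k * (hermiteM k).eval x =
      2 * (-1) ^ (m + 1) / (m + 1).factorial *
        ((3 - 6 * ((m : ℝ) + 1) * x ^ 2) * (hermiteM (2 * m + 3)).eval x -
          (2 * ((m : ℝ) + 1) + 1) * (3 * x - 2 * ((m : ℝ) + 1) * x ^ 3) *
            (hermiteM (2 * m + 2)).eval x)
  | 0 => by
      intro x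
      rw [show 2 * 0 + 3 = 3 from rfl, Finset.sum_range_succ, Finset.sum_range_succ,
        Finset.sum_range_one]
      rw [hker_zero_small.1, hker_zero_small.2.1, hker_zero_small.2.2]
      rw [show (3 : ℕ) = 1 + 2 from rfl, hermiteM_step 1, show (1 : ℕ) + 1 = 0 + 2 from rfl,
        hermiteM_step 0]
      simp [hermiteM]
      ring
  | (m + 1) => by
      intro x
      have ih := master m x
      rw [show 2 * (m + 1) + 3 = (2 * m + 3) + 1 + 1 from by ring, Finset.sum_range_succ,
        Finset.sum_range_succ]
      rw [show 2 * m + 3 + 1 = 2 * m + 4 from rfl, hker_even m, hker_odd m]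
      have e5 : (hermiteM (2 * m + 4 + 1)).eval x =
          x * (hermiteM (2 * m + 4)).eval x - ((2 * m : ℝ) + 4) / 2 *
            (hermiteM (2 * m + 3)).eval x := by
        rw [show 2 * m + 4 + 1 = (2 * m + 3) + 2 from by ring, hermiteM_step (2 * m + 3)]
        simp only [eval_sub, eval_mul, eval_X, eval_C]
        push_cast
        ring
      have e4 : (hermiteM (2 * m + 4)).eval x =
          x * (hermiteM (2 * m + 3)).eval x - ((2 * m : ℝ) + 3) / 2 *
            (hermiteM (2 * m + 2)).eval x := by
        rw [show 2 * m + 4 = (2 * m + 2) + 2 from by ring, hermiteM_step (2 * m + 2)]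
        simp only [eval_sub, eval_mul, eval_X, eval_C]
        push_cast
        ring
      rw [show 2 * (m + 1) + 2 = 2 * m + 4 from by ring, e5, e4]
      rw [mul_add, mul_add, ih]
      have f1 : ((m + 1).factorial : ℝ) = ((m : ℝ) + 1) * m.factorial := by
        rw [Nat.factorial_succ]; push_cast; ring
      have f2 : ((m + 1 + 1).factorial : ℝ) = ((m : ℝ) + 2) * (((m : ℝ) + 1) * m.factorial) := by
        rw [Nat.factorial_succ, Nat.factorial_succ]; push_cast; ring
      rw [f1, f2]
      have h2 : (m.factorial : ℝ) ≠ 0 := Nat.cast_ne_zero.2 (Nat.factorial_ne_zero _)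
      have h5 : ((m : ℝ) + 1) ≠ 0 := by positivity
      have h6 : ((m : ℝ) + 2) ≠ 0 := by positivity
      rw [show (-1 : ℝ) ^ (m + 1 + 1) = (-1) ^ m * 1 from by rw [pow_succ, pow_succ]; ring,
        show (-1 : ℝ) ^ (m + 1) = (-1) ^ m * (-1) from by rw [pow_succ]]
      push_cast
      field_simp
      ring



theorem stmt17 (n : ℕ) (hn : 1 ≤ n) :
    (X ^ 4 * ∑ k ∈ range (2 * n + 1),
        C ((2 : ℝ) ^ k / k.factorial *
          (derivative (derivative (derivative (hermiteM k)))).eval 0) * hermiteM k =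
      C (2 * (-1 : ℝ) ^ n / n.factorial) *
        ((C (3 : ℝ) - C (6 * (n : ℝ)) * X ^ 2) * hermiteM (2 * n + 1) -
          C (2 * (n : ℝ) + 1) * (C (3 : ℝ) * X - C (2 * (n : ℝ)) * X ^ 3) *
            hermiteM (2 * n))) ∧
    (∀ x : ℝ, x ≠ 0 →
      ∑ k ∈ range (2 * n + 1),
          (hermiteM k).eval x *
            (derivative (derivative (derivative (hermiteM k)))).eval 0 / hermiteNormSq k =
        2 * (-1 : ℝ) ^ n / (Real.sqrt Real.pi * n.factorial) *
          (((3 - 6 * (n : ℝ) * x ^ 2) * (hermiteM (2 * n + 1)).eval x -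
            (2 * (n : ℝ) + 1) * (3 - 2 * (n : ℝ) * x ^ 2) * x * (hermiteM (2 * n)).eval x) /
              x ^ 4)) := by
  obtain ⟨m, rfl⟩ : ∃ m, n = m + 1 := ⟨n - 1, by omega⟩
  have hπ : Real.sqrt Real.pi ≠ 0 := ne_of_gt (Real.sqrt_pos.mpr Real.pi_pos)
  have hfac : ∀ k : ℕ, (k.factorial : ℝ) ≠ 0 :=
    fun k => Nat.cast_ne_zero.2 (Nat.factorial_ne_zero _)
  constructor
  · apply Polynomial.funext
    intro x
    have hm := master m x
    simp only [eval_mul, eval_pow, eval_X, eval_finset_sum, eval_C, eval_sub, eval_add]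
    rw [show 2 * (m + 1) + 1 = 2 * m + 3 from by ring, show 2 * (m + 1) = 2 * m + 2 from by ring]
    have hsum : ∑ k ∈ range (2 * m + 3),
        (2 : ℝ) ^ k / k.factorial *
          (derivative (derivative (derivative (hermiteM k)))).eval 0 * (hermiteM k).eval x =
        ∑ k ∈ range (2 * m + 3), hker k * (hermiteM k).eval x := by
      refine Finset.sum_congr rfl fun k _ => ?_
      rw [hker]
    rw [hsum, hm]
    push_cast
    ring
  · intro x hx
    have hm := master m x
    have hx4 : x ^ 4 ≠ 0 := pow_ne_zero _ hx
    have key : ∀ k, (hermiteM k).eval x *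
        (derivative (derivative (derivative (hermiteM k)))).eval 0 / hermiteNormSq k =
        (Real.sqrt Real.pi)⁻¹ * (hker k * (hermiteM k).eval x) := by
      intro k
      rw [hermiteNormSq, hker]
      have h2 : (2 : ℝ) ^ k ≠ 0 := by positivity
      field_simp
    rw [show 2 * (m + 1) + 1 = 2 * m + 3 from by ring,
      Finset.sum_congr rfl fun k _ => key k, ← Finset.mul_sum]
    have hs : ∑ k ∈ range (2 * m + 3), hker k * (hermiteM k).eval x =
        (2 * (-1 : ℝ) ^ (m + 1) / (m + 1).factorial *
          ((3 - 6 * ((m : ℝ) + 1) * x ^ 2) * (hermiteM (2 * m + 3)).eval x -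
            (2 * ((m : ℝ) + 1) + 1) * (3 * x - 2 * ((m : ℝ) + 1) * x ^ 3) *
              (hermiteM (2 * m + 2)).eval x)) / x ^ 4 := by
      rw [eq_div_iff hx4, ← hm]; ring
    rw [hs, show 2 * (m + 1) = 2 * m + 2 from by ring]
    have hf := hfac (m + 1)
    push_cast at hf ⊢
    field_simp
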